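/- arXiv:1411.4476 — 4 statements merged into one kernel-verified Lean document; each statement's English description precedes it below -/
import Mathlib

section
/- For every feasible fractional solution (x̄,ȳ,z̄) to the dynamic facility location LP relaxation, there is a feasible fractional solution (x,y,z) whose LP cost is at most 2 times the LP cost of (x̄,ȳ,z̄) and which additionally satisfies: if Z^t = { j ∈ C : x^t_{ij} ≠ x^{t+1}_{ij} for some i ∈ F } denotes the set of clients whose fractional connection changes between time steps t and t+1, then ∑_{t=1}^{T−1} |Z^t| ≤ ∑_{t=1}^{T−1} ∑_{i∈F, j∈C} z^t_{ij}. -/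
/-!
STATEMENT 0: For every feasible fractional solution (x̄,ȳ,z̄) to the dynamic facility location
LP relaxation, there is a feasible fractional solution (x,y,z) whose LP cost is at most 2
times the LP cost of (x̄,ȳ,z̄) and which additionally satisfies: if
Z^t = { j ∈ C : x^t_{ij} ≠ x^{t+1}_{ij} for some i ∈ F } denotes the set of clients whose
fractional connection changes between time steps t and t+1, then
∑_{t=1}^{T−1} |Z^t| ≤ ∑_{t=1}^{T−1} ∑_{i∈F, j∈C} z^t_{ij}.
-/

open Finset

namespace DFL0

noncomputable section

variable {F C : Type*}

/-- Feasibility for the LP relaxation of the dynamic facility location problem with `T` time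
steps (time steps are `0, 1, …, T-1`): nonnegativity, every client fully fractionally
connected at every time step, connection bounded by opening, and `z` dominating the decrease
of the connection variables between consecutive time steps. -/
def Feasible [Fintype F] [Fintype C] (T : ℕ) (x : ℕ → F → C → ℝ) (y : ℕ → F → ℝ)
    (z : ℕ → F → C → ℝ) : Prop :=
  (∀ t, t < T → ∀ i j, 0 ≤ x t i j) ∧
  (∀ t, t < T → ∀ i, 0 ≤ y t i) ∧
  (∀ t, t + 1 < T → ∀ i j, 0 ≤ z t i j) ∧
  (∀ t, t < T → ∀ j, ∑ i, x t i j = 1) ∧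
  (∀ t, t < T → ∀ i j, x t i j ≤ y t i) ∧
  (∀ t, t + 1 < T → ∀ i j, x t i j - x (t+1) i j ≤ z t i j)

/-- The LP cost: hourly opening costs, connection costs, and switching costs. -/
def lpCost [Fintype F] [Fintype C] (T : ℕ) (f : F → ℝ) (d : ℕ → (F ⊕ C) → (F ⊕ C) → ℝ)
    (g : ℝ) (x : ℕ → F → C → ℝ) (y : ℕ → F → ℝ) (z : ℕ → F → C → ℝ) : ℝ :=
  (∑ t ∈ Finset.range T,
    ((∑ i, f i * y t i) + ∑ i, ∑ j, d t (Sum.inl i) (Sum.inr j) * x t i j)) +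
  g * ∑ t ∈ Finset.range (T - 1), ∑ i, ∑ j, z t i j

end

/- ### Auxiliary machinery -/


noncomputable def bstart (c : ℕ → ℝ) : ℕ → ℕ
  | 0 => 0
  | t+1 => if (∑ s ∈ Finset.Ico (bstart c t) (t+1), c s) < 1/2 then bstart c t else t+1

lemma bstart_le (c : ℕ → ℝ) : ∀ t, bstart c t ≤ t
  | 0 => le_refl 0
  | t+1 => by
      rw [bstart]
      split_ifs with h
      · exact (bstart_le c t).trans (Nat.le_succ t)
      · exact le_refl _

lemma bstart_mono (c : ℕ → ℝ) : Monotone (bstart c) := by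
  apply monotone_nat_of_le_succ
  intro t
  conv_rhs => rw [bstart]
  split_ifs with h
  · exact le_refl _
  · exact (bstart_le c t).trans (Nat.le_succ t)

lemma bstart_succ_ne (c : ℕ → ℝ) (t : ℕ) (h : bstart c (t+1) ≠ bstart c t) :
    bstart c (t+1) = t+1 ∧ 1/2 ≤ ∑ s ∈ Finset.Ico (bstart c t) (t+1), c s := by
  rw [bstart] at h ⊢
  split_ifs at h ⊢ with hc
  · exact absurd rfl h
  · exact ⟨rfl, le_of_not_gt hc⟩

lemma sum_Ico_bstart_lt (c : ℕ → ℝ) : ∀ t, ∑ s ∈ Finset.Ico (bstart c t) t, c s < 1/2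
  | 0 => by simp
  | t+1 => by
      rw [bstart]
      split_ifs with h
      · exact h
      · simp

lemma count_boundaries (c : ℕ → ℝ) (n : ℕ) (hc : ∀ t, t < n → 0 ≤ c t) :
    ∑ t ∈ Finset.range n, (if bstart c (t+1) ≠ bstart c t then (1:ℝ) else 0)
      ≤ 2 * ∑ t ∈ Finset.range n, c t := by
  classical
  set B : Finset ℕ := (Finset.range n).filter (fun t => bstart c (t+1) ≠ bstart c t) with hB
  have hLHS : ∑ t ∈ Finset.range n, (if bstart c (t+1) ≠ bstart c t then (1:ℝ) else 0)
      = (B.card : ℝ) := by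
    rw [hB, ← Finset.sum_boole]
  rw [hLHS]
  have hhalf : ∀ t ∈ B, (1/2 : ℝ) ≤ ∑ s ∈ Finset.Ico (bstart c t) (t+1), c s := by
    intro t ht
    exact (bstart_succ_ne c t (Finset.mem_filter.mp ht).2).2
  have key : ∀ a ∈ B, ∀ b ∈ B, a < b →
      Disjoint (Finset.Ico (bstart c a) (a+1)) (Finset.Ico (bstart c b) (b+1)) := by
    intro a ha b hb hlt
    apply Finset.disjoint_left.mpr
    intro s hs hs'
    have h1 : s < a + 1 := (Finset.mem_Ico.mp hs).2
    have h2 : bstart c b ≤ s := (Finset.mem_Ico.mp hs').1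
    have h3 : bstart c (a+1) = a + 1 :=
      (bstart_succ_ne c a (Finset.mem_filter.mp ha).2).1
    have h4 : bstart c (a+1) ≤ bstart c b := bstart_mono c (by omega)
    omega
  have hdisj : (B : Set ℕ).PairwiseDisjoint (fun t => Finset.Ico (bstart c t) (t+1)) := by
    intro a ha b hb hab
    rcases lt_or_gt_of_ne hab with h | h
    · exact key a (Finset.mem_coe.mp ha) b (Finset.mem_coe.mp hb) h
    · exact (key b (Finset.mem_coe.mp hb) a (Finset.mem_coe.mp ha) h).symm
  have hsub : B.biUnion (fun t => Finset.Ico (bstart c t) (t+1)) ⊆ Finset.range n := by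
    intro s hs
    obtain ⟨t, ht, hst⟩ := Finset.mem_biUnion.mp hs
    have := (Finset.mem_Ico.mp hst).2
    have := Finset.mem_range.mp (Finset.mem_filter.mp ht).1
    exact Finset.mem_range.mpr (by omega)
  calc (B.card : ℝ) = 2 * ∑ t ∈ B, (1/2 : ℝ) := by
        simp [Finset.sum_const]; ring
    _ ≤ 2 * ∑ t ∈ B, ∑ s ∈ Finset.Ico (bstart c t) (t+1), c s := by
        have := Finset.sum_le_sum hhalf
        linarith
    _ = 2 * ∑ s ∈ B.biUnion (fun t => Finset.Ico (bstart c t) (t+1)), c s := by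
        rw [Finset.sum_biUnion hdisj]
    _ ≤ 2 * ∑ s ∈ Finset.range n, c s := by
        have := Finset.sum_le_sum_of_subset_of_nonneg hsub
          (fun s hs _ => hc s (Finset.mem_range.mp hs))
        linarith

lemma sum_Ico_tele (f : ℕ → ℝ) {a b : ℕ} (h : a ≤ b) :
    ∑ u ∈ Finset.Ico a b, (f u - f (u+1)) = f a - f b := by
  induction b, h using Nat.le_induction with
  | base => simp
  | succ b hb ih => rw [Finset.sum_Ico_succ_top hb, ih]; ring

noncomputable def iset (c : ℕ → ℝ) (T t : ℕ) : Finset ℕ :=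
  (Finset.Ico (bstart c t) T).filter (fun s => bstart c s = bstart c t)

noncomputable def mfun (c : ℕ → ℝ) (w : ℕ → ℝ) (T t : ℕ) : ℝ :=
  if h : (iset c T t).Nonempty then (iset c T t).inf' h w else 0

lemma mem_iset_self (c : ℕ → ℝ) {T t : ℕ} (ht : t < T) : t ∈ iset c T t :=
  Finset.mem_filter.mpr ⟨Finset.mem_Ico.mpr ⟨bstart_le c t, ht⟩, rfl⟩

lemma iset_succ_eq (c : ℕ → ℝ) (T t : ℕ) (h : bstart c (t+1) = bstart c t) :
    iset c T (t+1) = iset c T t := by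
  simp only [iset, h]

lemma mfun_succ_eq (c : ℕ → ℝ) (w : ℕ → ℝ) (T t : ℕ) (h : bstart c (t+1) = bstart c t) :
    mfun c w T (t+1) = mfun c w T t := by
  simp only [mfun, iset_succ_eq c T t h]

theorem preprocessing_one
    {F C : Type*} [Fintype F] [Fintype C]
    (T : ℕ) (f : F → ℝ) (hf : ∀ i, 0 ≤ f i)
    (d : ℕ → (F ⊕ C) → (F ⊕ C) → ℝ)
    (hd_nonneg : ∀ t, t < T → ∀ u v, 0 ≤ d t u v)
    (hd_refl : ∀ t, t < T → ∀ u, d t u u = 0)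
    (hd_symm : ∀ t, t < T → ∀ u v, d t u v = d t v u)
    (hd_tri : ∀ t, t < T → ∀ u v w, d t u w ≤ d t u v + d t v w)
    (g : ℝ) (hg : 0 ≤ g)
    (xb : ℕ → F → C → ℝ) (yb : ℕ → F → ℝ) (zb : ℕ → F → C → ℝ)
    (hfeas : Feasible T xb yb zb) :
    ∃ (x : ℕ → F → C → ℝ) (y : ℕ → F → ℝ) (z : ℕ → F → C → ℝ),
      Feasible T x y z ∧
      lpCost T f d g x y z ≤ 2 * lpCost T f d g xb yb zb ∧
      ∑ t ∈ Finset.range (T - 1),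
          (((Finset.univ.filter fun j : C => ∃ i : F, x t i j ≠ x (t+1) i j).card : ℝ)) ≤
        ∑ t ∈ Finset.range (T - 1), ∑ i : F, ∑ j : C, z t i j := by
  classical
  obtain ⟨hx0, hy0, hz0, hx1, hxy, hzx⟩ := hfeas
  set c : C → ℕ → ℝ := fun j t => ∑ i, zb t i j with hc
  set m : C → ℕ → F → ℝ := fun j t i => mfun (c j) (fun s => xb s i j) T t with hm
  set S : C → ℕ → ℝ := fun j t => ∑ i, m j t i with hS
  set x : ℕ → F → C → ℝ := fun t i j => if t < T then m j t i / S j t else 0 with hxdef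
  set y : ℕ → F → ℝ := fun t i => 2 * yb t i with hydef
  set z : ℕ → F → C → ℝ := fun t i j =>
    if ∃ i', x t i' j ≠ x (t+1) i' j then x t i j else 0 with hzdef
  -- basic facts about m
  have hm_le : ∀ (j : C) (t : ℕ), t < T → ∀ i, m j t i ≤ xb t i j := by
    intro j t ht i
    have hne : (iset (c j) T t).Nonempty := ⟨t, mem_iset_self _ ht⟩
    simp only [hm, mfun, dif_pos hne]
    exact Finset.inf'_le _ (mem_iset_self _ ht)
  have hm_nonneg : ∀ (j : C) (t : ℕ), t < T → ∀ i, 0 ≤ m j t i := by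
    intro j t ht i
    have hne : (iset (c j) T t).Nonempty := ⟨t, mem_iset_self _ ht⟩
    simp only [hm, mfun, dif_pos hne]
    apply Finset.le_inf'
    intro s hs
    have hsT : s < T := (Finset.mem_Ico.mp (Finset.mem_filter.mp hs).1).2
    exact hx0 s hsT i j
  -- the key lower bound on the normalization
  have hShalf : ∀ (j : C) (t : ℕ), t < T → 1/2 < S j t := by
    intro j t ht
    set a := bstart (c j) t with ha
    have haT : a < T := lt_of_le_of_lt (bstart_le _ t) ht
    have hne : (iset (c j) T t).Nonempty := ⟨t, mem_iset_self _ ht⟩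
    set e := (iset (c j) T t).max' hne with he
    have heI : e ∈ iset (c j) T t := Finset.max'_mem _ hne
    have heT : e < T := (Finset.mem_Ico.mp (Finset.mem_filter.mp heI).1).2
    have hea : bstart (c j) e = a := (Finset.mem_filter.mp heI).2
    have hcsum : ∑ u ∈ Finset.Ico a e, c j u < 1/2 := by
      have h5 := sum_Ico_bstart_lt (c j) e
      rwa [hea] at h5
    have hmi : ∀ i, xb a i j - ∑ u ∈ Finset.Ico a e, zb u i j ≤ m j t i := by
      intro i
      simp only [hm, mfun, dif_pos hne]
      apply Finset.le_inf'
      intro s hs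
      have hsa : a ≤ s := (Finset.mem_Ico.mp (Finset.mem_filter.mp hs).1).1
      have hsT : s < T := (Finset.mem_Ico.mp (Finset.mem_filter.mp hs).1).2
      have hse : s ≤ e := Finset.le_max' _ s hs
      have tele : ∑ u ∈ Finset.Ico a s, (xb u i j - xb (u+1) i j) = xb a i j - xb s i j :=
        sum_Ico_tele _ hsa
      have h1 : xb a i j - xb s i j ≤ ∑ u ∈ Finset.Ico a s, zb u i j := by
        rw [← tele]
        apply Finset.sum_le_sum
        intro u hu
        have hu2 : u + 1 < T := by
          have := (Finset.mem_Ico.mp hu).2; omega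
        exact hzx u hu2 i j
      have h2 : ∑ u ∈ Finset.Ico a s, zb u i j ≤ ∑ u ∈ Finset.Ico a e, zb u i j := by
        apply Finset.sum_le_sum_of_subset_of_nonneg (Finset.Ico_subset_Ico le_rfl hse)
        intro u hu _
        have hu2 : u + 1 < T := by
          have := (Finset.mem_Ico.mp hu).2; omega
        exact hz0 u hu2 i j
      linarith
    have hsum := Finset.sum_le_sum (fun i (_ : i ∈ (Finset.univ : Finset F)) => hmi i)
    rw [Finset.sum_sub_distrib, hx1 a haT j, Finset.sum_comm] at hsum
    have hrw : ∑ u ∈ Finset.Ico a e, ∑ i : F, zb u i j = ∑ u ∈ Finset.Ico a e, c j u := by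
      apply Finset.sum_congr rfl
      intro u _
      simp [hc]
    rw [hrw] at hsum
    have : S j t = ∑ i, m j t i := rfl
    linarith
  have hSpos : ∀ (j : C) (t : ℕ), t < T → 0 < S j t := by
    intro j t ht
    linarith [hShalf j t ht]
  -- pointwise facts about x
  have hx_nonneg : ∀ (t : ℕ), t < T → ∀ i j, 0 ≤ x t i j := by
    intro t ht i j
    simp only [hxdef, if_pos ht]
    exact div_nonneg (hm_nonneg j t ht i) (le_of_lt (hSpos j t ht))
  have hx_le2 : ∀ (t : ℕ), t < T → ∀ i j, x t i j ≤ 2 * xb t i j := by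
    intro t ht i j
    simp only [hxdef, if_pos ht]
    have h1 : m j t i / S j t ≤ 2 * m j t i := by
      rw [div_le_iff₀ (hSpos j t ht)]
      nlinarith [hm_nonneg j t ht i, hShalf j t ht]
    linarith [hm_le j t ht i]
  have hx_sum : ∀ (t : ℕ), t < T → ∀ j, ∑ i, x t i j = 1 := by
    intro t ht j
    simp only [hxdef, if_pos ht]
    rw [← Finset.sum_div]
    exact div_self (ne_of_gt (hSpos j t ht))
  have hx_const : ∀ (j : C) (t : ℕ), t + 1 < T → bstart (c j) (t+1) = bstart (c j) t →
      ∀ i, x (t+1) i j = x t i j := by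
    intro j t ht hb i
    have htT : t < T := by omega
    have hm' : ∀ i', m j (t+1) i' = m j t i' := by
      intro i'
      simp only [hm]
      exact mfun_succ_eq _ _ _ _ hb
    have hSeq : S j (t+1) = S j t := by
      simp only [hS]
      exact Finset.sum_congr rfl (fun i' _ => hm' i')
    simp only [hxdef, if_pos ht, if_pos htT]
    rw [hm' i, hSeq]
  -- per-client change indicator
  have hz_sum : ∀ (t : ℕ), t + 1 < T → ∀ j,
      ∑ i, z t i j = (if ∃ i' : F, x t i' j ≠ x (t+1) i' j then (1:ℝ) else 0) := by
    intro t ht j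
    have htT : t < T := by omega
    by_cases h : ∃ i' : F, x t i' j ≠ x (t+1) i' j
    · simp only [hzdef, if_pos h]
      exact hx_sum t htT j
    · simp only [hzdef, if_neg h]
      simp
  have hind_le : ∀ (t : ℕ), t + 1 < T → ∀ j,
      (if ∃ i' : F, x t i' j ≠ x (t+1) i' j then (1:ℝ) else 0)
        ≤ (if bstart (c j) (t+1) ≠ bstart (c j) t then (1:ℝ) else 0) := by
    intro t ht j
    by_cases hb : bstart (c j) (t+1) = bstart (c j) t
    · have : ¬ ∃ i' : F, x t i' j ≠ x (t+1) i' j := by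
        push_neg
        intro i'
        exact (hx_const j t ht hb i').symm
      simp [this, hb]
    · split_ifs <;> norm_num
  refine ⟨x, y, z, ⟨hx_nonneg, ?_, ?_, hx_sum, ?_, ?_⟩, ?_, ?_⟩
  · -- y nonneg
    intro t ht i
    simp only [hydef]
    linarith [hy0 t ht i]
  · -- z nonneg
    intro t ht i j
    have htT : t < T := by omega
    simp only [hzdef]
    split_ifs with h
    · exact hx_nonneg t htT i j
    · exact le_refl 0
  · -- x ≤ y
    intro t ht i j
    have := hx_le2 t ht i j
    have := hxy t ht i j
    simp only [hydef]
    linarith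
  · -- z dominates decrease
    intro t ht i j
    have htT : t < T := by omega
    simp only [hzdef]
    split_ifs with h
    · have := hx_nonneg (t+1) ht i j
      linarith
    · push_neg at h
      rw [h i]
      simp
  · -- cost bound
    have hcost1 : ∀ t ∈ Finset.range T,
        ((∑ i, f i * y t i) + ∑ i, ∑ j, d t (Sum.inl i) (Sum.inr j) * x t i j)
          ≤ 2 * ((∑ i, f i * yb t i) + ∑ i, ∑ j, d t (Sum.inl i) (Sum.inr j) * xb t i j) := by
      intro t ht
      have htT : t < T := Finset.mem_range.mp ht
      have h1 : (∑ i, f i * y t i) = 2 * ∑ i, f i * yb t i := by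
        rw [Finset.mul_sum]
        apply Finset.sum_congr rfl
        intro i _
        simp only [hydef]; ring
      have h2 : ∑ i, ∑ j, d t (Sum.inl i) (Sum.inr j) * x t i j
          ≤ 2 * ∑ i, ∑ j, d t (Sum.inl i) (Sum.inr j) * xb t i j := by
        rw [Finset.mul_sum]
        apply Finset.sum_le_sum
        intro i _
        rw [Finset.mul_sum]
        apply Finset.sum_le_sum
        intro j _
        have := mul_le_mul_of_nonneg_left (hx_le2 t htT i j)
          (hd_nonneg t htT (Sum.inl i) (Sum.inr j))
        linarith
      linarith
    have hzcost : ∑ t ∈ Finset.range (T-1), ∑ i, ∑ j, z t i j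
        ≤ 2 * ∑ t ∈ Finset.range (T-1), ∑ i, ∑ j, zb t i j := by
      have step1 : ∀ t ∈ Finset.range (T-1),
          ∑ i, ∑ j, z t i j = ∑ j, (if ∃ i' : F, x t i' j ≠ x (t+1) i' j then (1:ℝ) else 0) := by
        intro t ht
        have ht' : t + 1 < T := by
          have := Finset.mem_range.mp ht; omega
        rw [Finset.sum_comm]
        exact Finset.sum_congr rfl (fun j _ => hz_sum t ht' j)
      calc ∑ t ∈ Finset.range (T-1), ∑ i, ∑ j, z t i j
          = ∑ t ∈ Finset.range (T-1), ∑ j,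
              (if ∃ i' : F, x t i' j ≠ x (t+1) i' j then (1:ℝ) else 0) :=
            Finset.sum_congr rfl step1
        _ ≤ ∑ t ∈ Finset.range (T-1), ∑ j,
              (if bstart (c j) (t+1) ≠ bstart (c j) t then (1:ℝ) else 0) := by
            apply Finset.sum_le_sum
            intro t ht
            apply Finset.sum_le_sum
            intro j _
            have ht' : t + 1 < T := by
              have := Finset.mem_range.mp ht; omega
            exact hind_le t ht' j
        _ = ∑ j, ∑ t ∈ Finset.range (T-1),
              (if bstart (c j) (t+1) ≠ bstart (c j) t then (1:ℝ) else 0) := Finset.sum_comm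
        _ ≤ ∑ j, 2 * ∑ t ∈ Finset.range (T-1), c j t := by
            apply Finset.sum_le_sum
            intro j _
            apply count_boundaries
            intro t ht
            apply Finset.sum_nonneg
            intro i _
            exact hz0 t (by omega) i j
        _ = 2 * ∑ t ∈ Finset.range (T-1), ∑ i, ∑ j, zb t i j := by
            rw [← Finset.mul_sum]
            congr 1
            rw [Finset.sum_comm]
            apply Finset.sum_congr rfl
            intro t _
            simp only [hc]
            exact Finset.sum_comm
    simp only [lpCost]
    have hA := Finset.sum_le_sum hcost1
    rw [← Finset.mul_sum] at hA
    have hgz : g * ∑ t ∈ Finset.range (T-1), ∑ i, ∑ j, z t i j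
        ≤ g * (2 * ∑ t ∈ Finset.range (T-1), ∑ i, ∑ j, zb t i j) :=
      mul_le_mul_of_nonneg_left hzcost hg
    ring_nf
    ring_nf at hA hgz
    linarith
  · -- final inequality
    apply Finset.sum_le_sum
    intro t ht
    have ht' : t + 1 < T := by
      have := Finset.mem_range.mp ht; omega
    have hcard : ((Finset.univ.filter fun j : C => ∃ i : F, x t i j ≠ x (t+1) i j).card : ℝ)
        = ∑ j, (if ∃ i : F, x t i j ≠ x (t+1) i j then (1:ℝ) else 0) := by
      rw [Finset.sum_boole]
    rw [hcard, Finset.sum_comm]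
    apply le_of_eq
    apply Finset.sum_congr rfl
    intro j _
    exact (hz_sum t ht' j).symm

end DFL0
end

section
/- For every feasible fractional solution (x,y,z) to the dynamic facility location LP relaxation, there exists a modified instance in which each facility i is replaced by finitely many copies having the same opening cost as i and located at the same point as i in every metric d_t, together with a feasible fractional solution (x',y',z') of the same LP cost, such that: (1) for every copy i', client j and time t, x'^t_{i'j} ∈ {0, y'^t_{i'}}; (2) for every copy i' there is a value o_{i'} ∈ [0,1] with y'^t_{i'} ∈ {0, o_{i'}} for every time t; and (3) for any client j and time t, if x^t_{ij} = x^{t+1}_{ij} for all original facilities i, then x'^t_{i'j} = x'^{t+1}_{i'j} for all copies i'. -/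
/-!
STATEMENT 1: For every feasible fractional solution (x,y,z) to the dynamic facility location
LP relaxation, there exists a modified instance in which each facility i is replaced by
finitely many copies having the same opening cost as i and located at the same point as i in
every metric d_t (the copies are indexed by `Fin n`, the map `π` sending each copy to the
original facility; the new opening costs are `f ∘ π` and the new distances are obtained from
`d` by mapping each copy to its original), together with a feasible fractional solution
(x',y',z') of the same LP cost, such that: (1) for every copy i', client j and time t,
x'^t_{i'j} ∈ {0, y'^t_{i'}}; (2) for every copy i' there is a value o_{i'} ∈ [0,1] with
y'^t_{i'} ∈ {0, o_{i'}} for every time t; and (3) for any client j and time t, if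
x^t_{ij} = x^{t+1}_{ij} for all original facilities i, then x'^t_{i'j} = x'^{t+1}_{i'j} for
all copies i'.
-/

open Finset

namespace DFL1

noncomputable section

variable {F C : Type*}

/-- Feasibility for the LP relaxation of the dynamic facility location problem with `T` time
steps (time steps are `0, 1, …, T-1`): nonnegativity, every client fully fractionally
connected at every time step, connection bounded by opening, and `z` dominating the decrease
of the connection variables between consecutive time steps. -/
def Feasible [Fintype F] [Fintype C] (T : ℕ) (x : ℕ → F → C → ℝ) (y : ℕ → F → ℝ)
    (z : ℕ → F → C → ℝ) : Prop :=
  (∀ t, t < T → ∀ i j, 0 ≤ x t i j) ∧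
  (∀ t, t < T → ∀ i, 0 ≤ y t i) ∧
  (∀ t, t + 1 < T → ∀ i j, 0 ≤ z t i j) ∧
  (∀ t, t < T → ∀ j, ∑ i, x t i j = 1) ∧
  (∀ t, t < T → ∀ i j, x t i j ≤ y t i) ∧
  (∀ t, t + 1 < T → ∀ i j, x t i j - x (t+1) i j ≤ z t i j)

/-- The LP cost: hourly opening costs, connection costs, and switching costs. -/
def lpCost [Fintype F] [Fintype C] (T : ℕ) (f : F → ℝ) (d : ℕ → (F ⊕ C) → (F ⊕ C) → ℝ)
    (g : ℝ) (x : ℕ → F → C → ℝ) (y : ℕ → F → ℝ) (z : ℕ → F → C → ℝ) : ℝ :=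
  (∑ t ∈ Finset.range T,
    ((∑ i, f i * y t i) + ∑ i, ∑ j, d t (Sum.inl i) (Sum.inr j) * x t i j)) +
  g * ∑ t ∈ Finset.range (T - 1), ∑ i, ∑ j, z t i j

end

lemma exists_split (S : Finset ℝ) (h0 : (0:ℝ) ∈ S) (h1 : (1:ℝ) ∈ S)
    (hnn : ∀ w ∈ S, 0 ≤ w) (hsub : ∀ w ∈ S, 1 ≤ w → w - 1 ∈ S) :
    ∃ (m : ℕ) (ℓ : ℕ → ℝ) (c : ℕ → ℝ), 1 ≤ m ∧
      (∀ k, k < m → 0 ≤ ℓ k ∧ ℓ k ≤ 1) ∧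
      (∀ w ∈ S, ∑ k ∈ Finset.range m, (if c k ≤ w then ℓ k else 0) = w) := by
  classical
  set K := S.card with hK
  have hK2 : 1 < K := Finset.one_lt_card.mpr ⟨0, h0, 1, h1, by norm_num⟩
  set iso := S.orderIsoOfFin rfl with hiso
  set b : ℕ → ℝ := fun k => if h : k < K then (iso ⟨k, h⟩ : ℝ) else 0 with hb
  have hbmem : ∀ k, k < K → b k ∈ S := by
    intro k h
    simp only [hb, dif_pos h]
    exact (iso ⟨k, h⟩).2
  have hmono : ∀ j k, j < K → k < K → (b j ≤ b k ↔ j ≤ k) := by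
    intro j k hj hk
    simp only [hb, dif_pos hj, dif_pos hk]
    rw [Subtype.coe_le_coe, OrderIso.le_iff_le, Fin.mk_le_mk]
  have hsurj : ∀ w ∈ S, ∃ k, k < K ∧ b k = w := by
    intro w hw
    refine ⟨(iso.symm ⟨w, hw⟩ : Fin K), (iso.symm ⟨w, hw⟩).2, ?_⟩
    simp only [hb, dif_pos (iso.symm ⟨w, hw⟩).2]
    rw [dif_pos (iso.symm ⟨w, hw⟩).2, Fin.eta, OrderIso.apply_symm_apply]
  have hb0 : b 0 = 0 := by
    obtain ⟨k0, hk0, hbk0⟩ := hsurj 0 h0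
    have h0K : 0 < K := by omega
    have hle : b 0 ≤ b k0 := (hmono 0 k0 h0K hk0).mpr (Nat.zero_le _)
    have h0le : 0 ≤ b 0 := hnn _ (hbmem 0 h0K)
    rw [hbk0] at hle
    linarith
  have hgap : ∀ k, k + 1 < K → b (k+1) - b k ≤ 1 := by
    intro k hk1
    by_contra hgt
    push_neg at hgt
    have hk : k < K := by omega
    have h1le : 1 ≤ b (k+1) := by have := hnn _ (hbmem k hk); linarith
    have hmem : b (k+1) - 1 ∈ S := hsub _ (hbmem _ hk1) h1le
    obtain ⟨j, hj, hbj⟩ := hsurj _ hmem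
    have hjk : j < k + 1 := by
      by_contra h
      push_neg at h
      have := (hmono (k+1) j hk1 hj).mpr h
      rw [hbj] at this
      linarith
    have hbjk : b j ≤ b k := (hmono j k (by omega) hk).mpr (by omega)
    rw [hbj] at hbjk
    linarith
  refine ⟨K - 1, fun k => b (k+1) - b k, fun k => b (k+1), by omega, ?_, ?_⟩
  · intro k hk
    have hk1 : k + 1 < K := by omega
    refine ⟨?_, ?_⟩
    · show (0:ℝ) ≤ b (k+1) - b k
      have := (hmono k (k+1) (by omega) hk1).mpr (by omega)
      linarith
    · exact hgap k hk1
  · intro w hw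
    obtain ⟨q, hq, hbq⟩ := hsurj w hw
    have hterm : ∀ k ∈ Finset.range (K-1),
        (if b (k+1) ≤ w then b (k+1) - b k else 0) = (if k < q then b (k+1) - b k else 0) := by
      intro k hk
      rw [Finset.mem_range] at hk
      have hk1 : k + 1 < K := by omega
      have hiff : (b (k+1) ≤ w) ↔ (k < q) := by
        rw [← hbq, hmono (k+1) q hk1 hq]
        omega
      simp only [hiff]
    rw [Finset.sum_congr rfl hterm, ← Finset.sum_filter]
    have hfilt : (Finset.range (K-1)).filter (· < q) = Finset.range q := by
      ext a
      simp only [Finset.mem_filter, Finset.mem_range]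
      omega
    rw [hfilt, Finset.sum_range_sub b, hb0, hbq, sub_zero]

theorem preprocessing_two
    {F C : Type*} [Fintype F] [Fintype C]
    (T : ℕ) (f : F → ℝ) (hf : ∀ i, 0 ≤ f i)
    (d : ℕ → (F ⊕ C) → (F ⊕ C) → ℝ)
    (hd_nonneg : ∀ t, t < T → ∀ u v, 0 ≤ d t u v)
    (hd_refl : ∀ t, t < T → ∀ u, d t u u = 0)
    (hd_symm : ∀ t, t < T → ∀ u v, d t u v = d t v u)
    (hd_tri : ∀ t, t < T → ∀ u v w, d t u w ≤ d t u v + d t v w)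
    (g : ℝ) (hg : 0 ≤ g)
    (x : ℕ → F → C → ℝ) (y : ℕ → F → ℝ) (z : ℕ → F → C → ℝ)
    (hfeas : Feasible T x y z) :
    ∃ (n : ℕ) (π : Fin n → F) (x' : ℕ → Fin n → C → ℝ) (y' : ℕ → Fin n → ℝ)
      (z' : ℕ → Fin n → C → ℝ),
      Feasible T x' y' z' ∧
      lpCost T (fun i' => f (π i'))
          (fun t u v => d t (Sum.map π id u) (Sum.map π id v)) g x' y' z' =
        lpCost T f d g x y z ∧
      (∀ t, t < T → ∀ (i' : Fin n) (j : C), x' t i' j = 0 ∨ x' t i' j = y' t i') ∧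
      (∀ i' : Fin n, ∃ o ∈ Set.Icc (0:ℝ) 1, ∀ t, t < T → y' t i' = 0 ∨ y' t i' = o) ∧
      (∀ (j : C) (t : ℕ), t + 1 < T → (∀ i : F, x t i j = x (t+1) i j) →
        ∀ i' : Fin n, x' t i' j = x' (t+1) i' j) := by
  classical
  obtain ⟨hx0, hy0, hz0, hxsum, hxy, hzx⟩ := hfeas
  -- the breakpoint set
  set B : Finset ℝ := insert 0 (insert 1
    ((((Finset.range T) ×ˢ ((Finset.univ : Finset F) ×ˢ (Finset.univ : Finset C))).image
        (fun p => x p.1 p.2.1 p.2.2)) ∪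
     (((Finset.range T) ×ˢ (Finset.univ : Finset F)).image (fun p => y p.1 p.2)))) with hBdef
  have hBne : B.Nonempty := ⟨0, by simp [hBdef]⟩
  have hBnn : ∀ w ∈ B, 0 ≤ w := by
    intro w hw
    simp only [hBdef, Finset.mem_insert, Finset.mem_union, Finset.mem_image,
      Finset.mem_product, Finset.mem_range] at hw
    rcases hw with rfl | rfl | ⟨⟨t, i, j⟩, ⟨ht, _⟩, rfl⟩ | ⟨⟨t, i⟩, ⟨ht, _⟩, rfl⟩
    · exact le_rfl
    · norm_num
    · exact hx0 t ht i j
    · exact hy0 t ht i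
  set M : ℕ := ⌈B.max' hBne⌉₊ + 1 with hMdef
  set S : Finset ℝ :=
    ((B ×ˢ Finset.range M).image (fun p => p.1 - (p.2 : ℝ))).filter (fun r => 0 ≤ r) with hSdef
  have hBS : ∀ w ∈ B, w ∈ S := by
    intro w hw
    rw [hSdef, Finset.mem_filter]
    refine ⟨Finset.mem_image.mpr ⟨(w, 0), Finset.mem_product.mpr ⟨hw, ?_⟩, by simp⟩, hBnn w hw⟩
    simp [hMdef]
  have hS0 : (0:ℝ) ∈ S := hBS 0 (by simp [hBdef])
  have hS1 : (1:ℝ) ∈ S := hBS 1 (by simp [hBdef])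
  have hSnn : ∀ w ∈ S, 0 ≤ w := fun w hw => (Finset.mem_filter.mp hw).2
  have hSsub : ∀ w ∈ S, 1 ≤ w → w - 1 ∈ S := by
    intro w hw h1w
    rw [hSdef, Finset.mem_filter, Finset.mem_image] at hw
    obtain ⟨⟨⟨v, k⟩, hvk, hw'⟩, hwnn⟩ := hw
    rw [Finset.mem_product, Finset.mem_range] at hvk
    simp only at hw'
    have hkM : k + 1 < M := by
      have hjv : (k : ℝ) < v := by rw [← hw'] at h1w; linarith
      have hvmax : v ≤ B.max' hBne := Finset.le_max' B v hvk.1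
      have : k < ⌈B.max' hBne⌉₊ := Nat.lt_ceil.mpr (lt_of_lt_of_le hjv hvmax)
      omega
    rw [hSdef, Finset.mem_filter, Finset.mem_image]
    refine ⟨⟨(v, k+1), Finset.mem_product.mpr ⟨hvk.1, Finset.mem_range.mpr hkM⟩, ?_⟩, by linarith⟩
    push_cast
    rw [← hw']
    ring
  obtain ⟨m, ℓ, c, hm1, hℓ, hkey⟩ := exists_split S hS0 hS1 hSnn hSsub
  have hxS : ∀ t, t < T → ∀ i j, x t i j ∈ S := by
    intro t ht i j
    refine hBS _ ?_
    simp only [hBdef, Finset.mem_insert, Finset.mem_union, Finset.mem_image]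
    exact Or.inr (Or.inr (Or.inl ⟨⟨t, i, j⟩, by simp [Finset.mem_product, ht], rfl⟩))
  have hyS : ∀ t, t < T → ∀ i, y t i ∈ S := by
    intro t ht i
    refine hBS _ ?_
    simp only [hBdef, Finset.mem_insert, Finset.mem_union, Finset.mem_image]
    exact Or.inr (Or.inr (Or.inr ⟨⟨t, i⟩, by simp [Finset.mem_product, ht], rfl⟩))
  -- the new solution on F × Fin m
  set X : ℕ → F × Fin m → C → ℝ :=
    fun t p j => if c (p.2 : ℕ) ≤ x t p.1 j then ℓ (p.2 : ℕ) else 0 with hXdef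
  set Y : ℕ → F × Fin m → ℝ :=
    fun t p => if c (p.2 : ℕ) ≤ y t p.1 then ℓ (p.2 : ℕ) else 0 with hYdef
  set pd : ℕ → F × Fin m → C → ℝ := fun t p j => max (X t p j - X (t+1) p j) 0 with hpddef
  set Z : ℕ → F × Fin m → C → ℝ := fun t p j =>
    pd t p j + (if (p.2 : ℕ) = 0 then z t p.1 j - ∑ k : Fin m, pd t (p.1, k) j else 0) with hZdef
  have hsumX : ∀ t, t < T → ∀ i j, (∑ k : Fin m, X t (i, k) j) = x t i j := by
    intro t ht i j
    rw [hXdef]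
    rw [Fin.sum_univ_eq_sum_range (fun k => if c k ≤ x t i j then ℓ k else 0) m]
    exact hkey _ (hxS t ht i j)
  have hsumY : ∀ t, t < T → ∀ i, (∑ k : Fin m, Y t (i, k)) = y t i := by
    intro t ht i
    rw [hYdef]
    rw [Fin.sum_univ_eq_sum_range (fun k => if c k ≤ y t i then ℓ k else 0) m]
    exact hkey _ (hyS t ht i)
  have hXnn : ∀ t p j, 0 ≤ X t p j := by
    intro t p j
    rw [hXdef]
    dsimp only
    split_ifs
    · exact (hℓ _ p.2.2).1
    · exact le_rfl
  have hYnn : ∀ t p, 0 ≤ Y t p := by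
    intro t p
    rw [hYdef]
    dsimp only
    split_ifs
    · exact (hℓ _ p.2.2).1
    · exact le_rfl
  have hpdnn : ∀ t p j, 0 ≤ pd t p j := fun t p j => le_max_right _ _
  have hpdge : ∀ t p j, X t p j - X (t+1) p j ≤ pd t p j := fun t p j => le_max_left _ _
  have hpdsum : ∀ t, t + 1 < T → ∀ i j, (∑ k : Fin m, pd t (i, k) j) ≤ z t i j := by
    intro t ht i j
    rcases le_total (x t i j) (x (t+1) i j) with h | h
    · have : ∀ k : Fin m, pd t (i, k) j = 0 := by
        intro k
        rw [hpddef]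
        refine max_eq_right ?_
        rw [hXdef]
        dsimp only
        rcases le_or_gt (c (k:ℕ)) (x t i j) with h1 | h1
        · rw [if_pos h1, if_pos (h1.trans h)]
          simp
        · rw [if_neg (not_le.mpr h1)]
          split_ifs
          · have := (hℓ _ k.2).1
            linarith
          · simp
      rw [Finset.sum_congr rfl (fun k _ => this k), Finset.sum_const_zero]
      exact hz0 t ht i j
    · have : ∀ k : Fin m, pd t (i, k) j = X t (i, k) j - X (t+1) (i, k) j := by
        intro k
        rw [hpddef]
        refine max_eq_left ?_
        rw [hXdef]
        dsimp only
        rcases le_or_gt (c (k:ℕ)) (x (t+1) i j) with h1 | h1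
        · rw [if_pos h1, if_pos (h1.trans h)]
          simp
        · rw [if_neg (not_le.mpr h1)]
          split_ifs
          · have := (hℓ _ k.2).1
            linarith
          · simp
      rw [Finset.sum_congr rfl (fun k _ => this k), Finset.sum_sub_distrib,
        hsumX t (by omega) i j, hsumX (t+1) (by omega) i j]
      exact hzx t ht i j
  have hZsum : ∀ t i j, (∑ k : Fin m, Z t (i, k) j) = z t i j := by
    intro t i j
    rw [hZdef]
    dsimp only
    rw [Finset.sum_add_distrib]
    have : (∑ k : Fin m, if (k : ℕ) = 0 then z t i j - ∑ k' : Fin m, pd t (i, k') j else 0)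
        = z t i j - ∑ k' : Fin m, pd t (i, k') j := by
      rw [Fin.sum_univ_eq_sum_range
        (fun k => if k = 0 then z t i j - ∑ k' : Fin m, pd t (i, k') j else 0) m]
      rw [Finset.sum_ite_eq' (Finset.range m) 0
        (fun _ => z t i j - ∑ k' : Fin m, pd t (i, k') j)]
      rw [if_pos (Finset.mem_range.mpr (by omega))]
    rw [this]
    ring
  have hXY : ∀ t, t < T → ∀ p j, X t p j ≤ Y t p := by
    intro t ht p j
    rw [hXdef, hYdef]
    dsimp only
    rcases le_or_gt (c (p.2:ℕ)) (x t p.1 j) with h1 | h1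
    · rw [if_pos h1, if_pos (h1.trans (hxy t ht p.1 j))]
    · rw [if_neg (not_le.mpr h1)]
      split_ifs
      · exact (hℓ _ p.2.2).1
      · exact le_rfl
  set e := (Fintype.equivFin (F × Fin m)).symm with hedef
  refine ⟨Fintype.card (F × Fin m), fun a => (e a).1,
    fun t a j => X t (e a) j, fun t a => Y t (e a), fun t a j => Z t (e a) j,
    ⟨?_, ?_, ?_, ?_, ?_, ?_⟩, ?_, ?_, ?_, ?_⟩
  · intro t ht a j
    exact hXnn t (e a) j
  · intro t ht a
    exact hYnn t (e a)
  · intro t ht a j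
    rw [hZdef]
    dsimp only
    have := hpdsum t ht (e a).1 j
    have := hpdnn t (e a) j
    split_ifs
    · have h2 : (0:ℝ) ≤ z t (e a).1 j - ∑ k : Fin m, pd t ((e a).1, k) j := by linarith
      linarith
    · linarith
  · intro t ht j
    rw [Equiv.sum_comp e (fun p => X t p j), Fintype.sum_prod_type]
    rw [Finset.sum_congr rfl (fun i _ => hsumX t ht i j)]
    exact hxsum t ht j
  · intro t ht a j
    exact hXY t ht (e a) j
  · intro t ht a j
    rw [hZdef]
    dsimp only
    have h1 := hpdge t (e a) j
    have h2 : (0:ℝ) ≤ z t (e a).1 j - ∑ k : Fin m, pd t ((e a).1, k) j := by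
      have := hpdsum t ht (e a).1 j
      linarith
    split_ifs
    · linarith
    · linarith
  · -- lpCost equality
    rw [lpCost, lpCost]
    congr 1
    · refine Finset.sum_congr rfl fun t ht => ?_
      rw [Finset.mem_range] at ht
      congr 1
      · rw [Equiv.sum_comp e (fun p => f p.1 * Y t p), Fintype.sum_prod_type]
        refine Finset.sum_congr rfl fun i _ => ?_
        dsimp only
        rw [← Finset.mul_sum, hsumY t ht i]
      · simp only [Sum.map_inl, Sum.map_inr, id_eq]
        rw [Equiv.sum_comp e (fun p => ∑ j, d t (Sum.inl p.1) (Sum.inr j) * X t p j),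
          Fintype.sum_prod_type]
        refine Finset.sum_congr rfl fun i _ => ?_
        dsimp only
        rw [Finset.sum_comm]
        refine Finset.sum_congr rfl fun j _ => ?_
        rw [← Finset.mul_sum, hsumX t ht i j]
    · congr 1
      refine Finset.sum_congr rfl fun t ht => ?_
      rw [Equiv.sum_comp e (fun p => ∑ j, Z t p j), Fintype.sum_prod_type]
      refine Finset.sum_congr rfl fun i _ => ?_
      rw [Finset.sum_comm]
      exact Finset.sum_congr rfl fun j _ => hZsum t i j
  · intro t ht a j
    rw [hXdef, hYdef]
    dsimp only
    rcases le_or_gt (c ((e a).2:ℕ)) (x t (e a).1 j) with h1 | h1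
    · right
      rw [if_pos h1, if_pos (h1.trans (hxy t ht (e a).1 j))]
    · rw [if_neg (not_le.mpr h1)]
      left
      rfl
  · intro a
    refine ⟨ℓ ((e a).2 : ℕ), ⟨(hℓ _ (e a).2.2).1, (hℓ _ (e a).2.2).2⟩, ?_⟩
    intro t ht
    rw [hYdef]
    dsimp only
    split_ifs
    · right; rfl
    · left; rfl
  · intro j t ht hsame a
    rw [hXdef]
    dsimp only
    rw [hsame (e a).1]

end DFL1
end

section
/- In the connection graph H, every simple directed cycle consists of exactly two arcs; equivalently, H contains no simple directed cycle with more than two arcs. -/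
/-!
STATEMENT 2: In the connection graph `H`, every simple directed cycle consists of exactly two
arcs; equivalently, `H` contains no simple directed cycle with more than two arcs.

`F` and `C` are finite disjoint sets of facilities and clients, `adj` is a bipartite graph
with all edges between `F` and `C`, every vertex carries a real clock value (`Q` on facilities,
`R` on clients), all distinct.  In the connection graph every vertex with at least one neighbor
has exactly one outgoing arc, pointing to its neighbor with the smallest clock value.
-/

namespace DFL2

noncomputable section

variable {F C : Type*}

/-- An element of a nonempty finset minimizing `f`. -/
def argminOn {α : Type*} (f : α → ℝ) (s : Finset α) (h : s.Nonempty) : α :=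
  Classical.choose (s.exists_min_image f h)

/-- Neighbors (facilities) of a client `j` in the bipartite graph `adj`. -/
def facNbrs [Fintype F] (adj : F → C → Prop) [∀ i j, Decidable (adj i j)] (j : C) :
    Finset F :=
  Finset.univ.filter fun i => adj i j

/-- Neighbors (clients) of a facility `i` in the bipartite graph `adj`. -/
def cliNbrs [Fintype C] (adj : F → C → Prop) [∀ i j, Decidable (adj i j)] (i : F) :
    Finset C :=
  Finset.univ.filter fun j => adj i j

/-- The connection graph: every vertex with at least one neighbor has exactly one outgoing
arc, pointing to its neighbor with the smallest clock value. -/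
def nextV [Fintype F] [Fintype C] (adj : F → C → Prop) [∀ i j, Decidable (adj i j)]
    (Q : F → ℝ) (R : C → ℝ) : F ⊕ C → Option (F ⊕ C)
  | Sum.inl i =>
    if h : (cliNbrs adj i).Nonempty then some (Sum.inr (argminOn R _ h)) else none
  | Sum.inr j =>
    if h : (facNbrs adj j).Nonempty then some (Sum.inl (argminOn Q _ h)) else none

end

lemma argminOn_mem {α : Type*} (f : α → ℝ) (s : Finset α) (h : s.Nonempty) :
    argminOn f s h ∈ s :=
  (Classical.choose_spec (s.exists_min_image f h)).1

lemma argminOn_le {α : Type*} (f : α → ℝ) (s : Finset α) (h : s.Nonempty)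
    {x : α} (hx : x ∈ s) : f (argminOn f s h) ≤ f x :=
  (Classical.choose_spec (s.exists_min_image f h)).2 x hx

/-- Two consecutive steps in the connection graph do not increase the clock. -/
lemma two_step_le {F C : Type*} [Fintype F] [Fintype C]
    (adj : F → C → Prop) [∀ i j, Decidable (adj i j)]
    (Q : F → ℝ) (R : C → ℝ) {a b c : F ⊕ C}
    (hab : nextV adj Q R a = some b) (hbc : nextV adj Q R b = some c) :
    Sum.elim Q R c ≤ Sum.elim Q R a := by
  cases a with
  | inl i =>
    rw [nextV] at hab
    split_ifs at hab with h
    · obtain rfl : b = Sum.inr (argminOn R _ h) := by simpa using hab.symm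
      set j := argminOn R (cliNbrs adj i) h with hj
      have hadj : adj i j := by
        have := argminOn_mem R (cliNbrs adj i) h
        exact (Finset.mem_filter.mp this).2
      rw [nextV] at hbc
      have hi : i ∈ facNbrs adj j := by simpa [facNbrs] using hadj
      split_ifs at hbc with h'
      · obtain rfl : c = Sum.inl (argminOn Q _ h') := by simpa using hbc.symm
        simpa using argminOn_le Q (facNbrs adj j) h' hi
  | inr j =>
    rw [nextV] at hab
    split_ifs at hab with h
    · obtain rfl : b = Sum.inl (argminOn Q _ h) := by simpa using hab.symm
      set i := argminOn Q (facNbrs adj j) h with hi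
      have hadj : adj i j := by
        have := argminOn_mem Q (facNbrs adj j) h
        exact (Finset.mem_filter.mp this).2
      rw [nextV] at hbc
      have hjm : j ∈ cliNbrs adj i := by simpa [cliNbrs] using hadj
      split_ifs at hbc with h'
      · obtain rfl : c = Sum.inr (argminOn R _ h') := by simpa using hbc.symm
        simpa using argminOn_le R (cliNbrs adj i) h' hjm

/-- Every simple directed cycle of the connection graph has exactly two arcs. -/
theorem no_long_cycles_in_connection_graph
    {F C : Type*} [Fintype F] [Fintype C]
    (adj : F → C → Prop) [∀ i j, Decidable (adj i j)]
    (Q : F → ℝ) (R : C → ℝ)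
    (hdistinct : Function.Injective (Sum.elim Q R))
    (n : ℕ) (hn : 1 ≤ n) (v : ℕ → F ⊕ C)
    (hsimple : ∀ a b, a < n → b < n → v a = v b → a = b)
    (hcycle : ∀ ℓ, ℓ < n → nextV adj Q R (v ℓ) = some (v ((ℓ + 1) % n))) :
    n = 2 := by
  set t : F ⊕ C → ℝ := Sum.elim Q R with ht
  set w : ℕ → F ⊕ C := fun ℓ => v (ℓ % n) with hw
  have hpos : 0 < n := hn
  have hstep : ∀ ℓ, nextV adj Q R (w ℓ) = some (w (ℓ + 1)) := by
    intro ℓ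
    have h1 : ℓ % n < n := Nat.mod_lt _ hpos
    have := hcycle (ℓ % n) h1
    rwa [Nat.mod_add_mod] at this
  have h2 : ∀ ℓ, t (w (ℓ + 2)) ≤ t (w ℓ) := fun ℓ =>
    two_step_le adj Q R (hstep ℓ) (hstep (ℓ + 1))
  have h2k : ∀ k ℓ, t (w (ℓ + 2 * k)) ≤ t (w ℓ) := by
    intro k
    induction k with
    | zero => intro ℓ; simp
    | succ k ih =>
      intro ℓ
      calc t (w (ℓ + 2 * (k + 1))) = t (w ((ℓ + 2) + 2 * k)) := by ring_nf
        _ ≤ t (w (ℓ + 2)) := ih (ℓ + 2)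
        _ ≤ t (w ℓ) := h2 ℓ
  have hperiod : ∀ ℓ, w (ℓ + 2 * n) = w ℓ := by
    intro ℓ
    simp [hw, Nat.add_mul_mod_self_left]
  have heq : ∀ ℓ, w (ℓ + 2) = w ℓ := by
    intro ℓ
    have h1 : t (w ℓ) ≤ t (w (ℓ + 2)) := by
      have := h2k (n - 1) (ℓ + 2)
      have harith : ℓ + 2 + 2 * (n - 1) = ℓ + 2 * n := by omega
      rw [harith, hperiod] at this
      exact this
    exact hdistinct (le_antisymm (h2 ℓ) h1)
  have h20 : v (2 % n) = v 0 := by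
    have := heq 0
    simpa [hw, Nat.zero_mod] using this
  have h2n : 2 % n = 0 := hsimple _ _ (Nat.mod_lt _ hpos) hpos h20
  have hdvd : n ∣ 2 := Nat.dvd_of_mod_eq_zero h2n
  have hle : n ≤ 2 := Nat.le_of_dvd (by norm_num) hdvd
  interval_cases n
  · -- n = 1 : self-loop, impossible by bipartiteness
    exfalso
    have := hcycle 0 (by norm_num)
    simp at this
    cases h : v 0 with
    | inl i =>
      rw [h, nextV] at this
      split_ifs at this
      simp at this
    | inr j =>
      rw [h, nextV] at this
      split_ifs at this
      simp at this
  · rfl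

end DFL2
end

section
/- Let F be a finite set and let x^1, …, x^m be vectors of nonnegative reals indexed by F with ∑_{i∈F} x^t_i = 1 for every t ∈ {1,…,m}. If ∑_{i∈F} min_{1≤u≤m} x^u_i < 1/2, then ∑_{t=1}^{m−1} ∑_{i∈F} max(x^t_i − x^{t+1}_i, 0) > 1/2. -/
/-!
STATEMENT 18: Let F be a finite set and let x^1, …, x^m be vectors of nonnegative reals
indexed by F with ∑_{i∈F} x^t_i = 1 for every t ∈ {1,…,m}.  If
∑_{i∈F} min_{1≤u≤m} x^u_i < 1/2, then
∑_{t=1}^{m−1} ∑_{i∈F} max(x^t_i − x^{t+1}_i, 0) > 1/2.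
-/

theorem total_variation_of_low_min_mass
    {F : Type*} [Fintype F] (m : ℕ) (hm : 1 ≤ m) (x : ℕ → F → ℝ)
    (hnonneg : ∀ t, 1 ≤ t → t ≤ m → ∀ i, 0 ≤ x t i)
    (hsum : ∀ t, 1 ≤ t → t ≤ m → ∑ i, x t i = 1)
    (hmin : ∑ i : F, (Finset.Icc 1 m).inf' (Finset.nonempty_Icc.mpr hm) (fun t => x t i)
        < 1 / 2) :
    1 / 2 < ∑ t ∈ Finset.Icc 1 (m - 1), ∑ i : F, max (x t i - x (t+1) i) 0 := by
  set y : F → ℝ := fun i =>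
    (Finset.Icc 1 m).inf' (Finset.nonempty_Icc.mpr hm) (fun t => x t i) with hy
  have key : ∀ i : F, x 1 i - y i ≤
      ∑ t ∈ Finset.range (m - 1), max (x (1 + t) i - x (1 + t + 1) i) 0 := by
    intro i
    obtain ⟨u, hu, hyu⟩ := Finset.exists_mem_eq_inf' (Finset.nonempty_Icc.mpr hm)
      (fun t => x t i)
    rw [Finset.mem_Icc] at hu
    have htel : x 1 i - x u i =
        ∑ t ∈ Finset.range (u - 1), (x (t + 1) i - x (t + 1 + 1) i) := by
      have h := Finset.sum_range_sub' (fun t => x (t + 1) i) (u - 1)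
      have hu1 : u - 1 + 1 = u := by omega
      rw [h, hu1]
    have hyu' : y i = x u i := hyu
    have h1 : x 1 i - y i ≤
        ∑ t ∈ Finset.range (u - 1), max (x (1 + t) i - x (1 + t + 1) i) 0 := by
      rw [hyu', htel]
      apply Finset.sum_le_sum
      intro t _
      have : (1 : ℕ) + t = t + 1 := by omega
      rw [this]
      exact le_max_left _ _
    refine h1.trans (Finset.sum_le_sum_of_subset_of_nonneg ?_ ?_)
    · exact Finset.range_subset_range.mpr (by omega)
    · intro t _ _; exact le_max_right _ _
  have hbig : 1 / 2 < ∑ i : F, (x 1 i - y i) := by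
    rw [Finset.sum_sub_distrib, hsum 1 le_rfl hm]
    linarith
  have hle : ∑ i : F, (x 1 i - y i) ≤
      ∑ t ∈ Finset.Icc 1 (m - 1), ∑ i : F, max (x t i - x (t+1) i) 0 := by
    calc ∑ i : F, (x 1 i - y i)
        ≤ ∑ i : F, ∑ t ∈ Finset.range (m - 1), max (x (1 + t) i - x (1 + t + 1) i) 0 :=
          Finset.sum_le_sum fun i _ => key i
      _ = ∑ t ∈ Finset.range (m - 1), ∑ i : F, max (x (1 + t) i - x (1 + t + 1) i) 0 :=
          Finset.sum_comm
      _ = ∑ t ∈ Finset.Icc 1 (m - 1), ∑ i : F, max (x t i - x (t+1) i) 0 := by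
          have h1 : Finset.Icc 1 (m - 1) = Finset.Ico 1 m := by
            ext a
            simp [Finset.mem_Icc, Finset.mem_Ico]
            omega
          rw [h1, Finset.sum_Ico_eq_sum_range]
  linarith
end
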